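/- If the preconditioned system moments satisfy s_0 > 0 and s_0 s_{d+1} > Σ_{i=1}^d s_i^2 is violated (i.e., s_0 ≤ 0 or s_0 s_{d+1} ≤ Σ s_i^2), then there is no Maxwellian M(v) = exp(α + β·v − γ|v|^2) with γ > 0 satisfying ∫ φ(v)(|v_1|/Δx) M(v) dv = (s_0, s_1, ..., s_d, s_{d+1})^T. -/

import Mathlib

open MeasureTheory Real

section helpers
variable {d : ℕ}

lemma euclid_norm_sq (v : EuclideanSpace ℝ (Fin d)) : ‖v‖ ^ 2 = ∑ i, v i ^ 2 := by
  rw [EuclideanSpace.norm_eq, Real.sq_sqrt (Finset.sum_nonneg fun i _ => by positivity)]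
  simp [sq_abs]

lemma euclid_coord_le_norm (v : EuclideanSpace ℝ (Fin d)) (i : Fin d) : |v i| ≤ ‖v‖ := by
  have h1 : |v i| = Real.sqrt ((v i) ^ 2) := (Real.sqrt_sq_eq_abs _).symm
  have h2 : ‖v‖ = Real.sqrt (∑ j, v j ^ 2) := by
    rw [← euclid_norm_sq v, Real.sqrt_sq (norm_nonneg v)]
  rw [h1, h2]
  apply Real.sqrt_le_sqrt
  exact Finset.single_le_sum (f := fun j => v j ^ 2) (fun j _ => by positivity) (Finset.mem_univ i)

lemma euclid_hyperplane_null (i : Fin d) (c : ℝ) :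
    (volume : Measure (EuclideanSpace ℝ (Fin d))) {v | v i = c} = 0 := by
  have h := PiLp.volume_preserving_ofLp (Fin d)
  have hm : MeasurableSet {f : Fin d → ℝ | f i = c} := by
    have : Measurable fun f : Fin d → ℝ => f i := measurable_pi_apply i
    exact this (measurableSet_singleton c)
  have hpre : {v : EuclideanSpace ℝ (Fin d) | v i = c}
      = (@WithLp.ofLp 2 (Fin d → ℝ)) ⁻¹' {f : Fin d → ℝ | f i = c} := rfl
  rw [hpre, h.measure_preimage hm.nullMeasurableSet]
  rw [MeasureTheory.volume_pi]
  exact MeasureTheory.Measure.pi_hyperplane (fun _ : Fin d => (volume : Measure ℝ)) i c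

lemma euclid_cont_coord (i : Fin d) : Continuous fun v : EuclideanSpace ℝ (Fin d) => v i :=
  (EuclideanSpace.proj (𝕜 := ℝ) (ι := Fin d) i).continuous

end helpers

section integrability
variable {d : ℕ}

lemma gauss_integrable {a : ℝ} (ha : 0 < a) :
    Integrable (fun v : EuclideanSpace ℝ (Fin d) => Real.exp (-a * ‖v‖ ^ 2)) := by
  have h := GaussianFourier.integrable_cexp_neg_mul_sq_norm_add
    (V := EuclideanSpace ℝ (Fin d)) (b := (a : ℂ)) (by simpa using ha) 0
    (0 : EuclideanSpace ℝ (Fin d))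
  have h2 := h.re
  refine h2.congr (Filter.Eventually.of_forall fun v => ?_)
  have he : -(a:ℂ) * (‖v‖:ℂ) ^ 2 + 0 * ((inner ℝ (0 : EuclideanSpace ℝ (Fin d)) v : ℝ) : ℂ)
      = ((-a * ‖v‖ ^ 2 : ℝ) : ℂ) := by push_cast; ring
  simp only [he, RCLike.re_to_complex, Complex.exp_ofReal_re]

lemma pow_le_factorial_mul_exp (n : ℕ) {x : ℝ} (hx : 0 ≤ x) :
    x ^ n ≤ n.factorial * Real.exp x := by
  have h1 : x ^ n / n.factorial ≤ ∑ i ∈ Finset.range (n + 1), x ^ i / i.factorial :=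
    Finset.single_le_sum (f := fun i => x ^ i / i.factorial)
      (fun i _ => by positivity) (Finset.self_mem_range_succ n)
  have h2 := Real.sum_le_exp_of_nonneg hx (n + 1)
  have h3 : (0:ℝ) < n.factorial := by exact_mod_cast n.factorial_pos
  calc x ^ n = (x ^ n / n.factorial) * n.factorial := by field_simp
    _ ≤ Real.exp x * n.factorial := by
        apply mul_le_mul_of_nonneg_right (h1.trans h2) h3.le
    _ = n.factorial * Real.exp x := by ring

lemma poly_gauss_integrable (n : ℕ) (b : ℝ) {γ : ℝ} (hγ : 0 < γ) :
    Integrable (fun v : EuclideanSpace ℝ (Fin d) =>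
      ‖v‖ ^ n * Real.exp (b * ‖v‖ - γ * ‖v‖ ^ 2)) := by
  set K : ℝ := (b + 1) ^ 2 / (2 * γ) with hK
  apply Integrable.mono' ((gauss_integrable (half_pos hγ)).const_mul
    (n.factorial * Real.exp K))
  · apply Continuous.aestronglyMeasurable
    fun_prop
  · refine Filter.Eventually.of_forall fun v => ?_
    have hv : (0:ℝ) ≤ ‖v‖ := norm_nonneg v
    have h1 : ‖v‖ ^ n ≤ n.factorial * Real.exp ‖v‖ := pow_le_factorial_mul_exp n hv
    have h2 : (b + 1) * ‖v‖ - γ * ‖v‖ ^ 2 ≤ K - γ / 2 * ‖v‖ ^ 2 := by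
      have h4 : (b + 1) * ‖v‖ - γ * ‖v‖ ^ 2 - (K - γ / 2 * ‖v‖ ^ 2)
          = -(((b + 1) - γ * ‖v‖) ^ 2) / (2 * γ) := by
        rw [hK]; field_simp; ring
      have h5 : -(((b + 1) - γ * ‖v‖) ^ 2) / (2 * γ) ≤ 0 :=
        div_nonpos_of_nonpos_of_nonneg (neg_nonpos_of_nonneg (sq_nonneg _)) (by linarith)
      linarith
    have hnn : 0 ≤ ‖v‖ ^ n * Real.exp (b * ‖v‖ - γ * ‖v‖ ^ 2) := by positivity
    rw [Real.norm_eq_abs, abs_of_nonneg hnn]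
    calc ‖v‖ ^ n * Real.exp (b * ‖v‖ - γ * ‖v‖ ^ 2)
        ≤ (n.factorial * Real.exp ‖v‖) * Real.exp (b * ‖v‖ - γ * ‖v‖ ^ 2) := by
          apply mul_le_mul_of_nonneg_right h1 (Real.exp_nonneg _)
      _ = n.factorial * Real.exp ((b + 1) * ‖v‖ - γ * ‖v‖ ^ 2) := by
          rw [mul_assoc, ← Real.exp_add]; ring_nf
      _ ≤ n.factorial * Real.exp (K - γ / 2 * ‖v‖ ^ 2) := by
          apply mul_le_mul_of_nonneg_left (Real.exp_le_exp.mpr h2)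
          positivity
      _ = n.factorial * Real.exp K * Real.exp (-(γ / 2) * ‖v‖ ^ 2) := by
          rw [mul_assoc, ← Real.exp_add]; ring_nf

lemma main_integrable (α : ℝ) (β : EuclideanSpace ℝ (Fin d)) {γ : ℝ} (hγ : 0 < γ)
    (n : ℕ) (C : ℝ) (P : EuclideanSpace ℝ (Fin d) → ℝ) (hPc : Continuous P)
    (hPb : ∀ v, |P v| ≤ C * ‖v‖ ^ n) :
    Integrable (fun v : EuclideanSpace ℝ (Fin d) =>
      P v * Real.exp (α + (∑ i, β i * v i) - γ * ‖v‖ ^ 2)) := by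
  have hsum : ∀ v : EuclideanSpace ℝ (Fin d), (∑ i, β i * v i) ≤ ‖β‖ * ‖v‖ := by
    intro v
    have : (∑ i, β i * v i) = (inner ℝ β v : ℝ) := by
      rw [PiLp.inner_apply]; simp [RCLike.inner_apply, mul_comm]
    rw [this]
    exact real_inner_le_norm β v
  apply Integrable.mono' ((poly_gauss_integrable n ‖β‖ hγ).const_mul (C * Real.exp α))
  · apply Continuous.aestronglyMeasurable
    apply hPc.mul
    apply Real.continuous_exp.comp
    exact ((continuous_const.add (continuous_finset_sum _ fun i _ =>
      continuous_const.mul (euclid_cont_coord i))).sub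
      (continuous_const.mul ((continuous_norm).pow 2)))
  · refine Filter.Eventually.of_forall fun v => ?_
    rw [Real.norm_eq_abs, abs_mul, Real.abs_exp]
    calc |P v| * Real.exp (α + (∑ i, β i * v i) - γ * ‖v‖ ^ 2)
        ≤ (C * ‖v‖ ^ n) * Real.exp (α + ‖β‖ * ‖v‖ - γ * ‖v‖ ^ 2) := by
          apply mul_le_mul (hPb v) (Real.exp_le_exp.mpr (by linarith [hsum v]))
            (Real.exp_nonneg _) ((abs_nonneg _).trans (hPb v))
      _ = C * Real.exp α * (‖v‖ ^ n * Real.exp (‖β‖ * ‖v‖ - γ * ‖v‖ ^ 2)) := by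
          rw [show α + ‖β‖ * ‖v‖ - γ * ‖v‖ ^ 2 = α + (‖β‖ * ‖v‖ - γ * ‖v‖ ^ 2) from by ring,
            Real.exp_add]
          ring

open scoped ENNReal

lemma pos_of_compl_null {d : ℕ} (s : Set (EuclideanSpace ℝ (Fin d)))
    (h : volume sᶜ = 0) : 0 < volume s := by
  have h1 : (0:ℝ≥0∞) < volume (Set.univ : Set (EuclideanSpace ℝ (Fin d))) :=
    isOpen_univ.measure_pos volume Set.univ_nonempty
  have h2 : volume (Set.univ : Set (EuclideanSpace ℝ (Fin d))) ≤ volume s + volume sᶜ := by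
    rw [← Set.union_compl_self s]
    exact measure_union_le s sᶜ
  rw [h, add_zero] at h2
  exact lt_of_lt_of_le h1 h2

theorem no_maxwellian_if_condition_violated
    (d : ℕ) (hd : 0 < d) (Δx : ℝ) (hΔx : 0 < Δx)
    (s₀ sd1 : ℝ) (s : Fin d → ℝ)
    (hviol : s₀ ≤ 0 ∨ s₀ * sd1 ≤ ∑ i, s i ^ 2) :
    ¬ ∃ (α : ℝ) (β : EuclideanSpace ℝ (Fin d)) (γ : ℝ), 0 < γ ∧
      (∫ v : EuclideanSpace ℝ (Fin d),
          (|v ⟨0, hd⟩| / Δx) * Real.exp (α + (∑ i, β i * v i) - γ * ‖v‖ ^ 2)) = s₀ ∧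
      (∀ i : Fin d, (∫ v : EuclideanSpace ℝ (Fin d),
          v i * (|v ⟨0, hd⟩| / Δx) * Real.exp (α + (∑ i, β i * v i) - γ * ‖v‖ ^ 2)) = s i) ∧
      (∫ v : EuclideanSpace ℝ (Fin d),
          ‖v‖ ^ 2 * (|v ⟨0, hd⟩| / Δx) * Real.exp (α + (∑ i, β i * v i) - γ * ‖v‖ ^ 2)) = sd1 := by
  rintro ⟨α, β, γ, hγ, h0, h1, h2⟩
  set i0 : Fin d := ⟨0, hd⟩ with hi0
  have hΔ' : Δx ≠ 0 := ne_of_gt hΔx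
  -- continuity of the coordinate/abs factor
  have hqc : Continuous fun v : EuclideanSpace ℝ (Fin d) => |v i0| / Δx :=
    ((euclid_cont_coord i0).abs).div_const Δx
  have hqnn : ∀ v : EuclideanSpace ℝ (Fin d), 0 ≤ |v i0| / Δx :=
    fun v => div_nonneg (abs_nonneg _) hΔx.le
  have hqle : ∀ v : EuclideanSpace ℝ (Fin d), |v i0| / Δx ≤ Δx⁻¹ * ‖v‖ := by
    intro v
    rw [div_eq_inv_mul]
    exact mul_le_mul_of_nonneg_left (euclid_coord_le_norm v i0) (inv_nonneg.mpr hΔx.le)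
  -- integrability of the three moment integrands
  have I0 : Integrable (fun v : EuclideanSpace ℝ (Fin d) =>
      (|v i0| / Δx) * Real.exp (α + (∑ i, β i * v i) - γ * ‖v‖ ^ 2)) := by
    apply main_integrable α β hγ 1 Δx⁻¹ _ hqc
    intro v
    rw [abs_of_nonneg (hqnn v), pow_one]
    exact hqle v
  have I1 : ∀ j : Fin d, Integrable (fun v : EuclideanSpace ℝ (Fin d) =>
      v j * (|v i0| / Δx) * Real.exp (α + (∑ i, β i * v i) - γ * ‖v‖ ^ 2)) := by
    intro j
    apply main_integrable α β hγ 2 Δx⁻¹ (fun v => v j * (|v i0| / Δx))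
      ((euclid_cont_coord j).mul hqc)
    intro v
    rw [abs_mul, abs_of_nonneg (hqnn v)]
    calc |v j| * (|v i0| / Δx) ≤ ‖v‖ * (Δx⁻¹ * ‖v‖) :=
          mul_le_mul (euclid_coord_le_norm v j) (hqle v) (hqnn v) (norm_nonneg v)
      _ = Δx⁻¹ * ‖v‖ ^ 2 := by ring
  have I2 : Integrable (fun v : EuclideanSpace ℝ (Fin d) =>
      ‖v‖ ^ 2 * (|v i0| / Δx) * Real.exp (α + (∑ i, β i * v i) - γ * ‖v‖ ^ 2)) := by
    apply main_integrable α β hγ 3 Δx⁻¹ (fun v => ‖v‖ ^ 2 * (|v i0| / Δx))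
      ((continuous_norm.pow 2).mul hqc)
    intro v
    rw [abs_mul, abs_of_nonneg (hqnn v), abs_of_nonneg (sq_nonneg ‖v‖)]
    calc ‖v‖ ^ 2 * (|v i0| / Δx) ≤ ‖v‖ ^ 2 * (Δx⁻¹ * ‖v‖) :=
          mul_le_mul_of_nonneg_left (hqle v) (sq_nonneg _)
      _ = Δx⁻¹ * ‖v‖ ^ 3 := by ring
  -- positivity of s₀
  have hs0 : 0 < s₀ := by
    rw [← h0, integral_pos_iff_support_of_nonneg
      (fun v => mul_nonneg (hqnn v) (Real.exp_nonneg _)) I0]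
    apply pos_of_compl_null
    apply measure_mono_null _ (euclid_hyperplane_null i0 0)
    intro v hv
    simp only [Set.mem_compl_iff, Function.mem_support, not_not] at hv
    rcases mul_eq_zero.mp hv with hq | he
    · exact (div_eq_zero_iff.mp hq).elim abs_eq_zero.mp (fun h => absurd h hΔ')
    · exact absurd he (Real.exp_ne_zero _)
  -- the key quadratic functional
  have hpt : ∀ v : EuclideanSpace ℝ (Fin d),
      (∑ i, (s₀ * v i - s i) ^ 2) * (|v i0| / Δx)
          * Real.exp (α + (∑ i, β i * v i) - γ * ‖v‖ ^ 2)
      = s₀ ^ 2 * (‖v‖ ^ 2 * (|v i0| / Δx)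
            * Real.exp (α + (∑ i, β i * v i) - γ * ‖v‖ ^ 2))
        - (∑ i, (2 * s₀ * s i) * (v i * (|v i0| / Δx)
            * Real.exp (α + (∑ i, β i * v i) - γ * ‖v‖ ^ 2)))
        + (∑ i, s i ^ 2) * ((|v i0| / Δx)
            * Real.exp (α + (∑ i, β i * v i) - γ * ‖v‖ ^ 2)) := by
    intro v
    have hg : (∑ i, (s₀ * v i - s i) ^ 2)
        = s₀ ^ 2 * ‖v‖ ^ 2 - 2 * s₀ * (∑ i, s i * v i) + ∑ i, s i ^ 2 := by
      rw [euclid_norm_sq, Finset.mul_sum, Finset.mul_sum, ← Finset.sum_sub_distrib,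
        ← Finset.sum_add_distrib]
      exact Finset.sum_congr rfl fun i _ => by ring
    have hsum2 : (∑ i, (2 * s₀ * s i) * (v i * (|v i0| / Δx)
          * Real.exp (α + (∑ i, β i * v i) - γ * ‖v‖ ^ 2)))
        = 2 * s₀ * (∑ i, s i * v i) * ((|v i0| / Δx)
          * Real.exp (α + (∑ i, β i * v i) - γ * ‖v‖ ^ 2)) := by
      rw [mul_assoc (2 * s₀), Finset.sum_mul, Finset.mul_sum]
      exact Finset.sum_congr rfl fun i _ => by ring
    rw [hg, hsum2]
    ring
  have IF : Integrable (fun v : EuclideanSpace ℝ (Fin d) =>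
      (∑ i, (s₀ * v i - s i) ^ 2) * (|v i0| / Δx)
        * Real.exp (α + (∑ i, β i * v i) - γ * ‖v‖ ^ 2)) := by
    apply Integrable.congr (f := fun v : EuclideanSpace ℝ (Fin d) =>
      s₀ ^ 2 * (‖v‖ ^ 2 * (|v i0| / Δx)
          * Real.exp (α + (∑ i, β i * v i) - γ * ‖v‖ ^ 2))
      - (∑ i, (2 * s₀ * s i) * (v i * (|v i0| / Δx)
          * Real.exp (α + (∑ i, β i * v i) - γ * ‖v‖ ^ 2)))
      + (∑ i, s i ^ 2) * ((|v i0| / Δx)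
          * Real.exp (α + (∑ i, β i * v i) - γ * ‖v‖ ^ 2)))
    · exact ((I2.const_mul _).sub (integrable_finset_sum _
        fun i _ => (I1 i).const_mul _)).add (I0.const_mul _)
    · exact Filter.Eventually.of_forall fun v => (hpt v).symm
  have hkey : (∫ v : EuclideanSpace ℝ (Fin d),
      (∑ i, (s₀ * v i - s i) ^ 2) * (|v i0| / Δx)
        * Real.exp (α + (∑ i, β i * v i) - γ * ‖v‖ ^ 2))
      = s₀ ^ 2 * sd1 - 2 * s₀ * (∑ i, s i ^ 2) + (∑ i, s i ^ 2) * s₀ := by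
    rw [integral_congr_ae (Filter.Eventually.of_forall hpt)]
    have hInt2 : Integrable (fun v : EuclideanSpace ℝ (Fin d) =>
        s₀ ^ 2 * (‖v‖ ^ 2 * (|v i0| / Δx)
          * Real.exp (α + (∑ i, β i * v i) - γ * ‖v‖ ^ 2))) := I2.const_mul _
    have hInt1 : Integrable (fun v : EuclideanSpace ℝ (Fin d) =>
        ∑ i, (2 * s₀ * s i) * (v i * (|v i0| / Δx)
          * Real.exp (α + (∑ j, β j * v j) - γ * ‖v‖ ^ 2))) :=
      integrable_finset_sum _ fun i _ => (I1 i).const_mul _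
    have hInt0 : Integrable (fun v : EuclideanSpace ℝ (Fin d) =>
        (∑ i, s i ^ 2) * ((|v i0| / Δx)
          * Real.exp (α + (∑ i, β i * v i) - γ * ‖v‖ ^ 2))) := I0.const_mul _
    have hIntsub : Integrable (fun v : EuclideanSpace ℝ (Fin d) =>
        s₀ ^ 2 * (‖v‖ ^ 2 * (|v i0| / Δx)
          * Real.exp (α + (∑ i, β i * v i) - γ * ‖v‖ ^ 2))
        - ∑ i, (2 * s₀ * s i) * (v i * (|v i0| / Δx)
          * Real.exp (α + (∑ j, β j * v j) - γ * ‖v‖ ^ 2))) := hInt2.sub hInt1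
    rw [integral_add hIntsub hInt0, integral_sub hInt2 hInt1,
      integral_const_mul, integral_const_mul,
      integral_finset_sum _ (fun i _ => (I1 i).const_mul _)]
    simp_rw [integral_const_mul]
    rw [h0, h2]
    have : (∑ i, 2 * s₀ * s i * ∫ v : EuclideanSpace ℝ (Fin d),
        v i * (|v i0| / Δx) * Real.exp (α + (∑ j, β j * v j) - γ * ‖v‖ ^ 2))
        = ∑ i, 2 * s₀ * (s i * s i) := by
      refine Finset.sum_congr rfl fun i _ => ?_
      rw [h1 i]; ring
    rw [this]
    have : (∑ i, 2 * s₀ * (s i * s i)) = 2 * s₀ * ∑ i, s i ^ 2 := by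
      rw [Finset.mul_sum]
      exact Finset.sum_congr rfl fun i _ => by ring
    rw [this]
  have hFpos : 0 < ∫ v : EuclideanSpace ℝ (Fin d),
      (∑ i, (s₀ * v i - s i) ^ 2) * (|v i0| / Δx)
        * Real.exp (α + (∑ i, β i * v i) - γ * ‖v‖ ^ 2) := by
    rw [integral_pos_iff_support_of_nonneg
      (fun v => mul_nonneg (mul_nonneg (Finset.sum_nonneg fun i _ => sq_nonneg _)
        (hqnn v)) (Real.exp_nonneg _)) IF]
    apply pos_of_compl_null
    refine measure_mono_null ?_
      (measure_union_null (euclid_hyperplane_null i0 (s i0 / s₀))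
        (euclid_hyperplane_null i0 0))
    · intro v hv
      simp only [Set.mem_compl_iff, Function.mem_support, not_not] at hv
      rcases mul_eq_zero.mp hv with hq | he
      · rcases mul_eq_zero.mp hq with hsz | hz
        · left
          have := (Finset.sum_eq_zero_iff_of_nonneg
            (fun i _ => sq_nonneg (s₀ * v i - s i))).mp hsz i0 (Finset.mem_univ i0)
          have h0' : s₀ * v i0 - s i0 = 0 := by
            exact pow_eq_zero_iff (n := 2) (by norm_num) |>.mp this
          show v i0 = s i0 / s₀
          rw [eq_div_iff hs0.ne']
          linarith
        · right
          exact (div_eq_zero_iff.mp hz).elim abs_eq_zero.mp (fun h => absurd h hΔ')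
      · exact absurd he (Real.exp_ne_zero _)
  rw [hkey] at hFpos
  rcases hviol with h | h
  · linarith
  · nlinarith
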